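/- Every sequence in the Fibonacci subshift 𝕂 that starts with 0 is the image under H of some sequence in 𝕂, and every sequence in 𝕂 that starts with 1 is the image under σ∘H of some sequence in 𝕂. In particular 𝕂 ⊆ H(𝕂) ∪ σ(H(𝕂)). -/
import Mathlib


/-- Fibonacci substitution on finite words: H(0)=01, H(1)=0 (0 ↦ `false`, 1 ↦ `true`). -/
def Hword : List Bool → List Bool
  | [] => []
  | false :: t => false :: true :: Hword t
  | true :: t => false :: Hword t

/-- Paper-indexed Fibonacci numbers, shifted by 2: `fibP k = F_{k-2}`, so
`fibP 0 = F_{-2} = 1`, `fibP 1 = F_{-1} = 0`, `fibP 2 = F_0 = 1`, `fibP 3 = F_1 = 1`, … -/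
def fibP : ℕ → ℕ
  | 0 => 1
  | 1 => 0
  | n + 2 => fibP (n + 1) + fibP n

/-- Fibonacci substitution on infinite binary sequences. -/
def Hseq (x : ℕ → Bool) : ℕ → Bool :=
  fun n => (Hword ((List.range (n + 1)).map x)).getD n false

/-- The left shift on infinite binary sequences. -/
def shift (x : ℕ → Bool) : ℕ → Bool := fun n => x (n + 1)

lemma Hword_append (a b : List Bool) : Hword (a ++ b) = Hword a ++ Hword b := by
  induction a with
  | nil => simp [Hword]
  | cons h t ih => cases h <;> simp [Hword, ih]

/-- Length of the H-image of the prefix of `x` of length `m`. -/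
def Lw (x : ℕ → Bool) (m : ℕ) : ℕ := (Hword ((List.range m).map x)).length

lemma map_range_add (x : ℕ → Bool) (m k : ℕ) :
    (List.range (m + k)).map x =
      (List.range m).map x ++ (List.range k).map (fun i => x (m + i)) := by
  rw [List.range_add, List.map_append, List.map_map]
  rfl

lemma Lw_succ (x : ℕ → Bool) (m : ℕ) :
    Lw x (m + 1) = Lw x m + (if x m then 1 else 2) := by
  unfold Lw
  rw [map_range_add x m 1, Hword_append, List.length_append]
  cases h : x m <;> simp [List.range_succ, Hword, h]

lemma Lw_add_le (x : ℕ → Bool) (m k : ℕ) : Lw x m + k ≤ Lw x (m + k) := by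
  induction k with
  | zero => simp
  | succ k ih =>
      have h2 := Lw_succ x (m + k)
      have h3 : m + (k + 1) = (m + k) + 1 := by omega
      rw [h3]
      cases h : x (m + k) <;> simp [h] at h2 <;> omega

lemma le_Lw (x : ℕ → Bool) (m : ℕ) : m ≤ Lw x m := by
  have := Lw_add_le x 0 m
  simpa [Lw, Hword] using this

lemma exists_block (x : ℕ → Bool) (n : ℕ) :
    ∃ m, n = Lw x m ∨ (n = Lw x m + 1 ∧ x m = false) := by
  induction n with
  | zero => exact ⟨0, Or.inl (by simp [Lw, Hword])⟩
  | succ n ih =>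
      obtain ⟨m, h | ⟨h, hx⟩⟩ := ih
      · cases hx : x m with
        | true => exact ⟨m + 1, Or.inl (by rw [Lw_succ]; simp [hx]; omega)⟩
        | false => exact ⟨m, Or.inr ⟨by omega, hx⟩⟩
      · exact ⟨m + 1, Or.inl (by rw [Lw_succ]; simp [hx]; omega)⟩

lemma Hseq_eq_getD (x : ℕ → Bool) (n m : ℕ) (h : n < Lw x m) :
    Hseq x n = (Hword ((List.range m).map x)).getD n false := by
  unfold Hseq
  rcases le_total m (n + 1) with hm | hm
  · obtain ⟨k, hk⟩ := Nat.exists_eq_add_of_le hm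
    rw [hk, map_range_add x m k, Hword_append, List.getD_append _ _ _ _ h]
  · obtain ⟨k, hk⟩ := Nat.exists_eq_add_of_le hm
    have hn : n < (Hword ((List.range (n + 1)).map x)).length := by
      have := le_Lw x (n + 1)
      simp only [Lw] at this
      omega
    rw [hk, map_range_add x (n + 1) k, Hword_append, List.getD_append _ _ _ _ hn]

lemma shift_iterate (x : ℕ → Bool) (m n : ℕ) : shift^[m] x n = x (m + n) := by
  induction m generalizing x with
  | zero => simp
  | succ m ih =>
      rw [Function.iterate_succ_apply, ih]
      simp [shift]
      ring_nf

lemma Hseq_shift (x : ℕ → Bool) (m n : ℕ) :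
    Hseq (shift^[m] x) n = Hseq x (Lw x m + n) := by
  have hlt : Lw x m + n < Lw x (m + (n + 1)) := by
    have := Lw_add_le x m (n + 1)
    omega
  rw [Hseq_eq_getD x _ _ hlt, map_range_add x m (n + 1), Hword_append]
  have hlen : (Hword ((List.range m).map x)).length ≤ Lw x m + n := Nat.le_add_right _ _
  rw [List.getD_append_right _ _ _ _ hlen]
  have hmap : (List.range (n + 1)).map (fun i => x (m + i)) =
      (List.range (n + 1)).map (shift^[m] x) := by
    apply List.map_congr_left
    intro i _
    rw [shift_iterate]
  rw [hmap]
  have hsub : Lw x m + n - (Hword ((List.range m).map x)).length = n := by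
    show Lw x m + n - Lw x m = n
    omega
  rw [hsub]
  rfl

lemma Hseq_zero (y : ℕ → Bool) : Hseq y 0 = false := by
  unfold Hseq
  cases h : y 0 <;> simp [List.range_succ, Hword, h]

lemma Hseq_one_of_false (y : ℕ → Bool) (h : y 0 = false) : Hseq y 1 = true := by
  unfold Hseq
  have : List.range 2 = [0, 1] := by decide
  rw [this]
  simp [Hword, h]

lemma continuous_Hseq : Continuous Hseq := by
  apply continuous_pi
  intro n
  have key : (fun x => Hseq x n) =
      (fun v : Fin (n + 1) → Bool =>
        (Hword ((List.range (n + 1)).map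
          (fun i => if h : i < n + 1 then v ⟨i, h⟩ else false))).getD n false)
      ∘ (fun (x : ℕ → Bool) (i : Fin (n + 1)) => x i.val) := by
    funext x
    simp only [Function.comp]
    unfold Hseq
    have hmap : (List.range (n + 1)).map x =
        (List.range (n + 1)).map (fun i => if h : i < n + 1 then x i else false) := by
      apply List.map_congr_left
      intro i hi
      rw [List.mem_range] at hi
      simp [hi]
    rw [hmap]
  rw [key]
  exact (continuous_of_discreteTopology).comp (continuous_pi fun i => continuous_apply i.val)

lemma continuous_shift : Continuous shift :=
  continuous_pi fun n => continuous_apply (n + 1)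

/-- every `x ∈ 𝕂` starting with `0` lies in `H(𝕂)`; every `x ∈ 𝕂` starting
with `1` lies in `σ(H(𝕂))`. In particular `𝕂 ⊆ H(𝕂) ∪ σ(H(𝕂))`. -/
theorem K_subset_HK (ρ : ℕ → Bool) (hρ : Hseq ρ = ρ)
    (K : Set (ℕ → Bool)) (hK : K = closure (Set.range fun n => shift^[n] ρ)) :
    (∀ x ∈ K, x 0 = false → ∃ y ∈ K, Hseq y = x) ∧
    (∀ x ∈ K, x 0 = true → ∃ y ∈ K, shift (Hseq y) = x) ∧
    K ⊆ Hseq '' K ∪ (shift ∘ Hseq) '' K := by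
  subst hK
  set S : Set (ℕ → Bool) := Set.range fun n => shift^[n] ρ with hS
  have hfix : ∀ k, Hseq ρ k = ρ k := fun k => congrFun hρ k
  -- letters of ρ at block positions
  have hLfalse : ∀ m, ρ (Lw ρ m) = false := by
    intro m
    have h1 := Hseq_shift ρ m 0
    rw [Hseq_zero] at h1
    rw [← hfix]
    simpa using h1.symm
  have hLtrue : ∀ m, ρ m = false → ρ (Lw ρ m + 1) = true := by
    intro m hm
    have h1 := Hseq_shift ρ m 1
    have h0 : (shift^[m] ρ) 0 = false := by rw [shift_iterate]; simpa using hm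
    rw [Hseq_one_of_false _ h0] at h1
    rw [← hfix]
    exact h1.symm
  -- orbit shift identity
  have horb : ∀ m, shift^[Lw ρ m] ρ = Hseq (shift^[m] ρ) := by
    intro m
    funext n
    rw [shift_iterate, Hseq_shift, hfix]
  -- desubstitution on the orbit
  have hdesub0 : ∀ n, ρ n = false → ∃ m, Hseq (shift^[m] ρ) = shift^[n] ρ := by
    intro n hn
    obtain ⟨m, h | ⟨h, hx⟩⟩ := exists_block ρ n
    · exact ⟨m, by rw [← horb, h]⟩
    · exfalso
      rw [h, hLtrue m hx] at hn
      simp at hn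
  have hdesub1 : ∀ n, ρ n = true → ∃ m, shift (Hseq (shift^[m] ρ)) = shift^[n] ρ := by
    intro n hn
    obtain ⟨m, h | ⟨h, hx⟩⟩ := exists_block ρ n
    · exfalso
      rw [h, hLfalse m] at hn
      simp at hn
    · refine ⟨m, ?_⟩
      rw [← horb, h, Function.iterate_succ_apply']
  -- topology
  have hcomp : IsCompact (closure S) := isClosed_closure.isCompact
  have himg1 : IsClosed (Hseq '' closure S) := (hcomp.image continuous_Hseq).isClosed
  have himg2 : IsClosed ((shift ∘ Hseq) '' closure S) :=
    (hcomp.image (continuous_shift.comp continuous_Hseq)).isClosed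
  have hmemS : ∀ m : ℕ, shift^[m] ρ ∈ closure S :=
    fun m => subset_closure ⟨m, rfl⟩
  have hopen : ∀ b : Bool, IsOpen {z : ℕ → Bool | z 0 = b} := by
    intro b
    have he : {z : ℕ → Bool | z 0 = b} = (fun z : ℕ → Bool => z 0) ⁻¹' {b} := by
      ext z; simp
    rw [he]
    exact (continuous_apply 0).isOpen_preimage _ (isOpen_discrete _)
  -- main argument for each letter
  have key0 : ∀ x ∈ closure S, x 0 = false → x ∈ Hseq '' closure S := by
    intro x hx h0
    have hcl : x ∈ closure (S ∩ {z : ℕ → Bool | z 0 = false}) := by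
      rw [mem_closure_iff]
      intro o ho hxo
      rw [mem_closure_iff] at hx
      obtain ⟨z, hz1, hz2⟩ := hx (o ∩ {z : ℕ → Bool | z 0 = false})
        (ho.inter (hopen false)) ⟨hxo, h0⟩
      exact ⟨z, hz1.1, hz2, hz1.2⟩
    refine closure_minimal ?_ himg1 hcl
    rintro z ⟨⟨n, rfl⟩, hz0⟩
    have hρn : ρ n = false := by
      have := shift_iterate ρ n 0
      simp only [Set.mem_setOf_eq] at hz0
      rw [this] at hz0
      simpa using hz0
    obtain ⟨m, hm⟩ := hdesub0 n hρn
    exact ⟨shift^[m] ρ, hmemS m, hm⟩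
  have key1 : ∀ x ∈ closure S, x 0 = true → x ∈ (shift ∘ Hseq) '' closure S := by
    intro x hx h0
    have hcl : x ∈ closure (S ∩ {z : ℕ → Bool | z 0 = true}) := by
      rw [mem_closure_iff]
      intro o ho hxo
      rw [mem_closure_iff] at hx
      obtain ⟨z, hz1, hz2⟩ := hx (o ∩ {z : ℕ → Bool | z 0 = true})
        (ho.inter (hopen true)) ⟨hxo, h0⟩
      exact ⟨z, hz1.1, hz2, hz1.2⟩
    refine closure_minimal ?_ himg2 hcl
    rintro z ⟨⟨n, rfl⟩, hz0⟩
    have hρn : ρ n = true := by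
      have := shift_iterate ρ n 0
      simp only [Set.mem_setOf_eq] at hz0
      rw [this] at hz0
      simpa using hz0
    obtain ⟨m, hm⟩ := hdesub1 n hρn
    exact ⟨shift^[m] ρ, hmemS m, hm⟩
  refine ⟨?_, ?_, ?_⟩
  · intro x hx h0
    obtain ⟨y, hy, hyx⟩ := key0 x hx h0
    exact ⟨y, hy, hyx⟩
  · intro x hx h0
    obtain ⟨y, hy, hyx⟩ := key1 x hx h0
    exact ⟨y, hy, hyx⟩
  · intro x hx
    cases h0 : x 0 with
    | false => exact Or.inl (key0 x hx h0)
    | true => exact Or.inr (key1 x hx h0)
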